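/- Let n ≥ 1 and let T : ℝⁿ → ℝⁿ be monotone and additively homogeneous. Then the following are equivalent: (a) there is no pair (I, J) of disjoint subsets of {1,…,n} such that I is a MIN-dominion for T and J is a MAX-dominion for T; (b) for every monotone additively homogeneous map G : ℝⁿ → ℝⁿ with sup_{x ∈ ℝⁿ} ‖G(x) − T(x)‖_H < ∞, there exists λ ∈ ℝ such that for every x ∈ ℝⁿ and every i ∈ {1,…,n}, the sequence k ↦ [G^k(x)]_i / k converges to λ as k → ∞, where G^k denotes the k-fold iterate of G. -/

import Mathlib

/-- `T` is additively homogeneous: `T(x + c·e) = T(x) + c·e`. -/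
def AddHomog (n : ℕ) (T : (Fin n → ℝ) → (Fin n → ℝ)) : Prop :=
  ∀ (x : Fin n → ℝ) (c : ℝ), T (fun i => x i + c) = fun i => T x i + c

/-- `Δ` is a MIN-dominion for `T`: there is `β` with `T_i(t·e_{Δᶜ}) ≤ β`
for all `i ∈ Δ` and all `t ≥ 0`. -/
def MinDominion (n : ℕ) (T : (Fin n → ℝ) → (Fin n → ℝ)) (Δ : Set (Fin n)) : Prop :=
  Δ.Nonempty ∧ ∃ β : ℝ, ∀ i ∈ Δ, ∀ t : ℝ, 0 ≤ t →
    T (Δᶜ.indicator fun _ => t) i ≤ β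

/-- `Δ` is a MAX-dominion for `T`: there is `α` with `T_i(−t·e_{Δᶜ}) ≥ α`
for all `i ∈ Δ` and all `t ≥ 0`. -/
def MaxDominion (n : ℕ) (T : (Fin n → ℝ) → (Fin n → ℝ)) (Δ : Set (Fin n)) : Prop :=
  Δ.Nonempty ∧ ∃ α : ℝ, ∀ i ∈ Δ, ∀ t : ℝ, 0 ≤ t →
    α ≤ T (Δᶜ.indicator fun _ => -t) i

/-- Hilbert's seminorm `‖x‖_H = max_i x_i − min_i x_i`. -/
noncomputable def hilbertSeminorm (n : ℕ) (x : Fin n → ℝ) : ℝ :=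
  (⨆ i, x i) - ⨅ i, x i

/-- The additive slice space `A_α^β(T) = {x : α·e + x ≤ T(x) ≤ β·e + x}`. -/
def addSliceSpace (n : ℕ) (T : (Fin n → ℝ) → (Fin n → ℝ)) (α β : ℝ) : Set (Fin n → ℝ) :=
  {x | ∀ i, α + x i ≤ T x i ∧ T x i ≤ β + x i}

open Filter
open scoped Classical

section Aux

variable {n : ℕ}

lemma dom_le (T : (Fin n → ℝ) → (Fin n → ℝ)) (hmono : Monotone T) (hhom : AddHomog n T)
    {u v : Fin n → ℝ} {c : ℝ} (h : ∀ j, u j ≤ v j + c) (i : Fin n) :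
    T u i ≤ T v i + c := by
  have h2 : T u ≤ T (fun j => v j + c) := hmono h
  have := h2 i
  rwa [hhom v c] at this

lemma dom_ge (T : (Fin n → ℝ) → (Fin n → ℝ)) (hmono : Monotone T) (hhom : AddHomog n T)
    {u v : Fin n → ℝ} {c : ℝ} (h : ∀ j, v j + c ≤ u j) (i : Fin n) :
    T v i + c ≤ T u i := by
  have h2 : T (fun j => v j + c) ≤ T u := hmono h
  have := h2 i
  rwa [hhom v c] at this

lemma min_growth (hn : 1 ≤ n) (H : (Fin n → ℝ) → (Fin n → ℝ))
    (hm : Monotone H) (hh : AddHomog n H) (Δ : Set (Fin n)) (β : ℝ)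
    (hd : ∀ i ∈ Δ, ∀ t : ℝ, 0 ≤ t → H (Δᶜ.indicator fun _ => t) i ≤ β) :
    ∀ (k : ℕ), ∀ i ∈ Δ, H^[k] 0 i ≤ k * β := by
  haveI : Nonempty (Fin n) := ⟨⟨0, hn⟩⟩
  obtain ⟨i0, hi0⟩ := Finite.exists_max (H 0)
  set m : ℝ := max β (H 0 i0) with hm_def
  have hmβ : β ≤ m := le_max_left _ _
  have key : ∀ k : ℕ, ∀ i, H^[k] 0 i ≤ if i ∈ Δ then (k : ℝ) * β else (k : ℝ) * m := by
    intro k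
    induction k with
    | zero => intro i; simp
    | succ k ih =>
      intro i
      have htnn : (0:ℝ) ≤ (k:ℝ) * (m - β) :=
        mul_nonneg (Nat.cast_nonneg k) (sub_nonneg.mpr hmβ)
      have hw : (fun i => if i ∈ Δ then (k:ℝ) * β else (k:ℝ) * m)
          = fun i => Δᶜ.indicator (fun _ => (k:ℝ) * (m - β)) i + (k:ℝ) * β := by
        funext j
        by_cases hj : j ∈ Δ
        · simp [Set.indicator_apply, hj]
        · simp [Set.indicator_apply, hj]; ring
      have h1 : H^[k+1] 0 i ≤ H (fun i => if i ∈ Δ then (k:ℝ) * β else (k:ℝ) * m) i := by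
        rw [Function.iterate_succ_apply']
        exact hm (fun j => ih j) i
      rw [hw, hh (Δᶜ.indicator (fun _ => (k:ℝ) * (m - β))) ((k:ℝ) * β)] at h1
      replace h1 : H^[k+1] 0 i ≤ H (Δᶜ.indicator fun _ => (k:ℝ)*(m-β)) i + (k:ℝ)*β := h1
      by_cases hi : i ∈ Δ
      · have h3 := hd i hi _ htnn
        simp only [hi, if_pos]
        push_cast
        linarith
      · have h3 : H (Δᶜ.indicator fun _ => (k:ℝ)*(m-β)) i ≤ H 0 i + (k:ℝ)*(m-β) := by
          refine dom_le H hm hh (fun j => ?_) i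
          by_cases hj : j ∈ Δ
          · simp [Set.indicator_apply, hj]; exact htnn
          · simp [Set.indicator_apply, hj]
        simp only [hi, if_neg, not_false_iff]
        push_cast
        have h4 : H 0 i ≤ m := le_trans (hi0 i) (le_max_right _ _)
        linarith
  intro k i hi
  have := key k i
  rwa [if_pos hi] at this

lemma max_growth (hn : 1 ≤ n) (H : (Fin n → ℝ) → (Fin n → ℝ))
    (hm : Monotone H) (hh : AddHomog n H) (Δ : Set (Fin n)) (α : ℝ)
    (hd : ∀ i ∈ Δ, ∀ t : ℝ, 0 ≤ t → α ≤ H (Δᶜ.indicator fun _ => -t) i) :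
    ∀ (k : ℕ), ∀ i ∈ Δ, (k : ℝ) * α ≤ H^[k] 0 i := by
  haveI : Nonempty (Fin n) := ⟨⟨0, hn⟩⟩
  obtain ⟨i0, hi0⟩ := Finite.exists_min (H 0)
  set m : ℝ := min α (H 0 i0) with hm_def
  have hmα : m ≤ α := min_le_left _ _
  have key : ∀ k : ℕ, ∀ i, (if i ∈ Δ then (k : ℝ) * α else (k : ℝ) * m) ≤ H^[k] 0 i := by
    intro k
    induction k with
    | zero => intro i; simp
    | succ k ih =>
      intro i
      have htnn : (0:ℝ) ≤ (k:ℝ) * (α - m) :=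
        mul_nonneg (Nat.cast_nonneg k) (sub_nonneg.mpr hmα)
      have hw : (fun i => if i ∈ Δ then (k:ℝ) * α else (k:ℝ) * m)
          = fun i => Δᶜ.indicator (fun _ => -((k:ℝ) * (α - m))) i + (k:ℝ) * α := by
        funext j
        by_cases hj : j ∈ Δ
        · simp [Set.indicator_apply, hj]
        · simp [Set.indicator_apply, hj]; ring
      have h1 : H (fun i => if i ∈ Δ then (k:ℝ) * α else (k:ℝ) * m) i ≤ H^[k+1] 0 i := by
        rw [Function.iterate_succ_apply']
        exact hm (fun j => ih j) i
      rw [hw, hh (Δᶜ.indicator (fun _ => -((k:ℝ) * (α - m)))) ((k:ℝ) * α)] at h1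
      replace h1 : H (Δᶜ.indicator fun _ => -((k:ℝ)*(α-m))) i + (k:ℝ)*α ≤ H^[k+1] 0 i := h1
      by_cases hi : i ∈ Δ
      · have h3 := hd i hi _ htnn
        simp only [hi, if_pos]
        push_cast
        linarith
      · have h3 : H 0 i + -((k:ℝ)*(α-m)) ≤ H (Δᶜ.indicator fun _ => -((k:ℝ)*(α-m))) i := by
          refine dom_ge H hm hh (fun j => ?_) i
          by_cases hj : j ∈ Δ
          · simp [Set.indicator_apply, hj]; linarith
          · simp [Set.indicator_apply, hj]
        simp only [hi, if_neg, not_false_iff]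
        push_cast
        have h4 : m ≤ H 0 i := le_trans (min_le_right _ _) (hi0 i)
        linarith
  intro k i hi
  have := key k i
  rwa [if_pos hi] at this



lemma ultra_fix {γ : Type*} [Finite γ] (F : Ultrafilter ℕ) (g : ℕ → γ) :
    ∃ c, {m | g m = c} ∈ F := by
  by_contra h
  push_neg at h
  have h2 : ∀ c : γ, {m | g m = c}ᶜ ∈ F := fun c =>
    (Ultrafilter.compl_mem_iff_notMem).mpr (h c)
  have h3 : (⋂ c, {m | g m = c}ᶜ) ∈ F := Filter.iInter_mem.mpr h2
  obtain ⟨m, hm⟩ := Filter.nonempty_of_mem h3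
  simp only [Set.mem_iInter, Set.mem_compl_iff, Set.mem_setOf_eq] at hm
  exact hm (g m) rfl

lemma exists_top {γ : Type*} [Fintype γ] [Nonempty γ] (r : γ → γ → Prop)
    (hrefl : ∀ i, r i i) (htrans : ∀ {i j k}, r i j → r j k → r i k)
    (htotal : ∀ i j, r i j ∨ r j i) : ∃ i, ∀ j, r j i := by
  have key : ∀ s : Finset γ, s.Nonempty → ∃ i ∈ s, ∀ j ∈ s, r j i := by
    intro s
    induction s using Finset.induction with
    | empty => intro h; exact absurd h (by simp)
    | @insert a s ha ih =>
      intro _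
      rcases s.eq_empty_or_nonempty with hs | hs
      · subst hs
        exact ⟨a, by simp, by simp [hrefl]⟩
      · obtain ⟨i, hi, hmax⟩ := ih hs
        rcases htotal i a with h | h
        · refine ⟨a, Finset.mem_insert_self _ _, ?_⟩
          intro j hj
          rcases Finset.mem_insert.mp hj with rfl | hj
          · exact hrefl j
          · exact htrans (hmax j hj) h
        · refine ⟨i, Finset.mem_insert_of_mem hi, ?_⟩
          intro j hj
          rcases Finset.mem_insert.mp hj with rfl | hj
          · exact h
          · exact hmax j hj
  obtain ⟨i, _, hi⟩ := key Finset.univ Finset.univ_nonempty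
  exact ⟨i, fun j => hi j (Finset.mem_univ j)⟩


variable {n : ℕ}

lemma unbounded_slice_dominions (hn : 1 ≤ n)
    (T : (Fin n → ℝ) → (Fin n → ℝ)) (hmono : Monotone T) (hhom : AddHomog n T)
    (α β : ℝ) (xs : ℕ → Fin n → ℝ)
    (hs : ∀ m i, α + xs m i ≤ T (xs m) i ∧ T (xs m) i ≤ β + xs m i)
    (hub : ∀ R : ℝ, ∃ m i j, R < xs m i - xs m j) :
    ∃ I J : Set (Fin n), Disjoint I J ∧ MinDominion n T I ∧ MaxDominion n T J := by
  haveI : Nonempty (Fin n) := ⟨⟨0, hn⟩⟩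
  classical
  choose imax himax using fun m => Finite.exists_max (xs m)
  choose imin himin using fun m => Finite.exists_min (xs m)
  set s : ℕ → ℝ := fun m => xs m (imax m) - xs m (imin m) with hs_def
  have hs_ub : ∀ R : ℝ, ∃ m, R < s m := by
    intro R; obtain ⟨m, i, j, h⟩ := hub R
    refine ⟨m, lt_of_lt_of_le h ?_⟩
    have h1 := himax m i
    have h2 := himin m j
    simp only [hs_def]
    linarith
  haveI hNB : (Filter.comap s atTop).NeBot := by
    rw [Filter.comap_neBot_iff]
    intro t ht
    obtain ⟨a, ha⟩ := Filter.mem_atTop_sets.mp ht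
    obtain ⟨m, hm⟩ := hs_ub a
    exact ⟨m, ha _ hm.le⟩
  set F : Ultrafilter ℕ := Ultrafilter.of (Filter.comap s atTop) with hF_def
  have hsF : Tendsto s (F : Filter ℕ) atTop :=
    (Filter.tendsto_comap).mono_left (Ultrafilter.of_le _)
  obtain ⟨⟨i0, j0⟩, hp0⟩ := ultra_fix F (fun m => (imax m, imin m))
  have htend : Tendsto (fun m => xs m i0 - xs m j0) (F : Filter ℕ) atTop := by
    refine hsF.congr' (Filter.eventuallyEq_of_mem hp0 ?_)
    intro m hm
    simp only [Set.mem_setOf_eq, Prod.mk.injEq] at hm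
    simp [hs_def, hm.1, hm.2]
  set rel : Fin n → Fin n → Prop := fun i j => ∃ C, {m | xs m i - xs m j ≤ C} ∈ F with hrel_def
  have hrefl : ∀ i, rel i i := fun i => ⟨0, by
    have : {m | xs m i - xs m i ≤ 0} = Set.univ := by ext m; simp
    rw [this]; exact Filter.univ_mem⟩
  have htrans : ∀ {i j k}, rel i j → rel j k → rel i k := by
    rintro i j k ⟨C1, h1⟩ ⟨C2, h2⟩
    refine ⟨C1 + C2, Filter.mem_of_superset (Filter.inter_mem h1 h2) ?_⟩
    rintro m ⟨hm1, hm2⟩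
    simp only [Set.mem_setOf_eq] at *
    linarith
  have hdiv : ∀ {i j}, ¬ rel i j → ∀ c : ℝ, {m | c ≤ xs m i - xs m j} ∈ F := by
    intro i j h c
    have h1 : {m | xs m i - xs m j ≤ c} ∉ F := fun hc => h ⟨c, hc⟩
    have h2 := (Ultrafilter.compl_mem_iff_notMem).mpr h1
    refine Filter.mem_of_superset h2 ?_
    intro m hm
    simp only [Set.mem_compl_iff, Set.mem_setOf_eq, not_le] at hm
    exact hm.le
  have htotal : ∀ i j, rel i j ∨ rel j i := by
    intro i j
    by_cases h : rel i j
    · exact Or.inl h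
    · refine Or.inr ⟨0, Filter.mem_of_superset (hdiv h 0) ?_⟩
      intro m hm
      simp only [Set.mem_setOf_eq] at *
      linarith
  have hni0j0 : ¬ rel i0 j0 := by
    rintro ⟨C, hC⟩
    have h2 : {m | C + 1 ≤ xs m i0 - xs m j0} ∈ F := htend.eventually_ge_atTop (C+1)
    obtain ⟨m, hm1, hm2⟩ := Filter.nonempty_of_mem (Filter.inter_mem hC h2)
    simp only [Set.mem_setOf_eq] at hm1 hm2
    linarith
  set A : Set (Fin n) := {i | ∀ j, rel j i} with hA_def
  set B : Set (Fin n) := {i | ∀ j, rel i j} with hB_def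
  obtain ⟨i1, hi1⟩ := exists_top rel hrefl (fun h1 h2 => htrans h1 h2) htotal
  obtain ⟨j1, hj1⟩ := exists_top (fun i j => rel j i) hrefl
     (fun h1 h2 => htrans h2 h1) (fun i j => (htotal j i))
  have hi1A : i1 ∈ A := hi1
  have hj1B : j1 ∈ B := hj1
  have hdisjAB : ∀ i, i ∈ B → i ∈ A → False := by
    intro i hiB hiA
    exact hni0j0 (htrans (hiA i0) (hiB j0))
  -- uniform constant
  have hCex : ∀ p : Fin n × Fin n, ∃ C : ℝ, rel p.1 p.2 → {m | xs m p.1 - xs m p.2 ≤ C} ∈ F := by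
    intro p
    by_cases h : rel p.1 p.2
    · obtain ⟨C, hC⟩ := h; exact ⟨C, fun _ => hC⟩
    · exact ⟨0, fun hh => absurd hh h⟩
  choose C hC using hCex
  obtain ⟨p0, hp0max⟩ := Finite.exists_max C
  set DD : ℝ := C p0 with hDD
  set Sgood : Set ℕ := ⋂ p : Fin n × Fin n, {m | rel p.1 p.2 → xs m p.1 - xs m p.2 ≤ C p}
    with hSgood_def
  have hSgoodF : Sgood ∈ F := by
    show Sgood ∈ (F : Filter ℕ)
    rw [hSgood_def]
    refine Filter.iInter_mem.mpr ?_
    intro p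
    by_cases h : rel p.1 p.2
    · exact Filter.mem_of_superset (hC p h) (fun m hm _ => hm)
    · exact Filter.mem_of_superset Filter.univ_mem (fun m _ hh => absurd hh h)
  have hgood : ∀ m ∈ Sgood, ∀ i j, rel i j → xs m i - xs m j ≤ DD := by
    intro m hm i j hij
    have h1 : m ∈ {m | rel i j → xs m i - xs m j ≤ C (i, j)} := by
      rw [hSgood_def] at hm
      exact Set.mem_iInter.mp hm (i, j)
    exact le_trans (h1 hij) (hp0max (i, j))
  refine ⟨B, A, Set.disjoint_left.mpr (fun i hiB hiA => hdisjAB i hiB hiA), ⟨⟨j1, hj1B⟩, β + 2*DD, ?_⟩,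
    ⟨⟨i1, hi1A⟩, α - 2*DD, ?_⟩⟩
  · -- MIN dominion for B
    intro i hiB t ht
    have hl : ∀ j, ∃ k, j ∉ B → ¬ rel j k := by
      intro j
      by_cases hj : j ∈ B
      · exact ⟨j, fun h => absurd hj h⟩
      · have : ¬ ∀ k, rel j k := hj
        push_neg at this
        obtain ⟨k, hk⟩ := this
        exact ⟨k, fun _ => hk⟩
    choose l hlspec using hl
    set Sdiv : Set ℕ := ⋂ j : Fin n, {m | j ∉ B → t ≤ xs m j - xs m (l j)} with hSdiv_def
    have hSdivF : Sdiv ∈ F := by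
      show Sdiv ∈ (F : Filter ℕ)
      rw [hSdiv_def]
      refine Filter.iInter_mem.mpr ?_
      intro j
      by_cases hj : j ∈ B
      · exact Filter.mem_of_superset Filter.univ_mem (fun m _ hh => absurd hj hh)
      · exact Filter.mem_of_superset (hdiv (hlspec j hj) t) (fun m hm _ => hm)
    obtain ⟨m, hmg, hmd⟩ := Filter.nonempty_of_mem (Filter.inter_mem hSgoodF hSdivF)
    have hdivm : ∀ j, j ∉ B → t ≤ xs m j - xs m (l j) := by
      intro j hj
      rw [hSdiv_def] at hmd
      exact Set.mem_iInter.mp hmd j hj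
    set c : ℝ := DD - xs m j1 with hc_def
    have hcomp : ∀ j, (Bᶜ.indicator fun _ => t) j ≤ xs m j + c := by
      intro j
      by_cases hj : j ∈ B
      · have h0 : (Bᶜ.indicator fun _ => t) j = 0 := Set.indicator_of_notMem (by simpa using hj) _
        rw [h0, hc_def]
        have h1 : xs m j1 - xs m j ≤ DD := hgood m hmg j1 j (hj1B j)
        linarith
      · have h0 : (Bᶜ.indicator fun _ => t) j = t := Set.indicator_of_mem (by simpa using hj) _
        rw [h0, hc_def]
        have h1 : t ≤ xs m j - xs m (l j) := hdivm j hj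
        have h2 : xs m j1 - xs m (l j) ≤ DD := hgood m hmg j1 (l j) (hj1B (l j))
        linarith
    have h3 : T (Bᶜ.indicator fun _ => t) i ≤ T (xs m) i + c := dom_le T hmono hhom hcomp i
    have h4 : T (xs m) i ≤ β + xs m i := (hs m i).2
    have h5 : xs m i - xs m j1 ≤ DD := hgood m hmg i j1 (hiB j1)
    rw [hc_def] at h3
    linarith
  · -- MAX dominion for A
    intro i hiA t ht
    have hl : ∀ j, ∃ k, j ∉ A → ¬ rel k j := by
      intro j
      by_cases hj : j ∈ A
      · exact ⟨j, fun h => absurd hj h⟩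
      · have : ¬ ∀ k, rel k j := hj
        push_neg at this
        obtain ⟨k, hk⟩ := this
        exact ⟨k, fun _ => hk⟩
    choose l hlspec using hl
    set Sdiv : Set ℕ := ⋂ j : Fin n, {m | j ∉ A → t ≤ xs m (l j) - xs m j} with hSdiv_def
    have hSdivF : Sdiv ∈ F := by
      show Sdiv ∈ (F : Filter ℕ)
      rw [hSdiv_def]
      refine Filter.iInter_mem.mpr ?_
      intro j
      by_cases hj : j ∈ A
      · exact Filter.mem_of_superset Filter.univ_mem (fun m _ hh => absurd hj hh)
      · exact Filter.mem_of_superset (hdiv (hlspec j hj) t) (fun m hm _ => hm)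
    obtain ⟨m, hmg, hmd⟩ := Filter.nonempty_of_mem (Filter.inter_mem hSgoodF hSdivF)
    have hdivm : ∀ j, j ∉ A → t ≤ xs m (l j) - xs m j := by
      intro j hj
      rw [hSdiv_def] at hmd
      exact Set.mem_iInter.mp hmd j hj
    set c : ℝ := -DD - xs m i1 with hc_def
    have hcomp : ∀ j, xs m j + c ≤ (Aᶜ.indicator fun _ => -t) j := by
      intro j
      by_cases hj : j ∈ A
      · have h0 : (Aᶜ.indicator fun _ => -t) j = 0 := Set.indicator_of_notMem (by simpa using hj) _
        rw [h0, hc_def]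
        have h1 : xs m j - xs m i1 ≤ DD := hgood m hmg j i1 (hi1A j)
        linarith
      · have h0 : (Aᶜ.indicator fun _ => -t) j = -t := Set.indicator_of_mem (by simpa using hj) _
        rw [h0, hc_def]
        have h1 : t ≤ xs m (l j) - xs m j := hdivm j hj
        have h2 : xs m (l j) - xs m i1 ≤ DD := hgood m hmg (l j) i1 (hi1A (l j))
        linarith
    have h3 : T (xs m) i + c ≤ T (Aᶜ.indicator fun _ => -t) i := dom_ge T hmono hhom hcomp i
    have h4 : α + xs m i ≤ T (xs m) i := (hs m i).1
    have h5 : xs m i1 - xs m i ≤ DD := hgood m hmg i1 i (hiA i1)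
    rw [hc_def] at h3
    linarith

lemma iter_dom_le (H : (Fin n → ℝ) → (Fin n → ℝ)) (hm : Monotone H) (hh : AddHomog n H)
    (k : ℕ) : ∀ {u v : Fin n → ℝ} {c : ℝ}, (∀ j, u j ≤ v j + c) → ∀ i, H^[k] u i ≤ H^[k] v i + c := by
  induction k with
  | zero => intro u v c h i; simpa using h i
  | succ k ih =>
    intro u v c h i
    rw [Function.iterate_succ_apply, Function.iterate_succ_apply]
    exact ih (fun j => dom_le H hm hh h j) i

lemma slices_bounded (hn : 1 ≤ n)
    (T : (Fin n → ℝ) → (Fin n → ℝ)) (hmono : Monotone T) (hhom : AddHomog n T)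
    (hno : ¬ ∃ I J : Set (Fin n), Disjoint I J ∧ MinDominion n T I ∧ MaxDominion n T J)
    (a b : ℝ) :
    ∃ R : ℝ, ∀ x : Fin n → ℝ, (∀ i, a + x i ≤ T x i ∧ T x i ≤ b + x i) →
      ∀ i j, x i - x j ≤ R := by
  by_contra h
  push_neg at h
  choose xs hx1 hx2 using h
  refine hno (unbounded_slice_dominions hn T hmono hhom a b (fun m : ℕ => xs (m : ℝ))
    (fun m i => hx1 (m : ℝ) i) ?_)
  intro R
  obtain ⟨m, hm⟩ := exists_nat_gt R
  obtain ⟨i, j, hij⟩ := hx2 (m : ℝ)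
  exact ⟨m, i, j, lt_trans hm hij⟩

theorem stmt6 (n : ℕ) (hn : 1 ≤ n)
    (T : (Fin n → ℝ) → (Fin n → ℝ))
    (hmono : Monotone T) (hhom : AddHomog n T) :
    (¬ ∃ I J : Set (Fin n),
        Disjoint I J ∧ MinDominion n T I ∧ MaxDominion n T J) ↔
    (∀ G : (Fin n → ℝ) → (Fin n → ℝ), Monotone G → AddHomog n G →
        (∃ M : ℝ, ∀ x : Fin n → ℝ, hilbertSeminorm n (G x - T x) ≤ M) →
        ∃ lam : ℝ, ∀ (x : Fin n → ℝ) (i : Fin n),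
          Filter.Tendsto (fun k : ℕ => (G^[k] x) i / k) Filter.atTop (nhds lam)) := by
  haveI : Nonempty (Fin n) := ⟨⟨0, hn⟩⟩
  constructor
  · -- (a) → (b)
    rintro hno G hGmono hGhom ⟨M, hM⟩
    -- pairwise bound from seminorm hypothesis
    have hMpq : ∀ x p q, (G x p - T x p) - (G x q - T x q) ≤ M := by
      intro x p q
      have h1 : (G x - T x) p ≤ ⨆ i, (G x - T x) i :=
        le_ciSup (Set.finite_range _).bddAbove p
      have h2 : ⨅ i, (G x - T x) i ≤ (G x - T x) q :=
        ciInf_le (Set.finite_range _).bddBelow q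
      have h3 := hM x
      unfold hilbertSeminorm at h3
      have e1 : (G x - T x) p = G x p - T x p := rfl
      have e2 : (G x - T x) q = G x q - T x q := rfl
      linarith [h1, h2, h3, e1, e2]
    obtain ⟨c0', hc0'⟩ := Finite.exists_max (fun j => |G 0 j - 0|)
    set c0 : ℝ := |G 0 c0' - 0| with hc0def
    have hc0 : ∀ j, |G 0 j - (0 : Fin n → ℝ) j| ≤ c0 := fun j => by
      simpa using hc0' j
    obtain ⟨t0hi, ht0hi⟩ := Finite.exists_max (T 0)
    obtain ⟨t0lo, ht0lo⟩ := Finite.exists_min (T 0)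
    -- orbit increment bound
    have horb : ∀ k j, |G (G^[k] 0) j - G^[k] 0 j| ≤ c0 := by
      intro k
      induction k with
      | zero => intro j; simpa using hc0 j
      | succ k ih =>
        intro j
        rw [Function.iterate_succ_apply']
        have hup : ∀ j', G (G^[k] 0) j' ≤ G^[k] 0 j' + c0 := fun j' => by
          have := (abs_le.mp (ih j')).2; linarith
        have hdn : ∀ j', G^[k] 0 j' + -c0 ≤ G (G^[k] 0) j' := fun j' => by
          have := (abs_le.mp (ih j')).1; linarith
        have h1 : G (G (G^[k] 0)) j ≤ G (G^[k] 0) j + c0 := dom_le G hGmono hGhom hup j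
        have h2 : G (G^[k] 0) j + -c0 ≤ G (G (G^[k] 0)) j := dom_ge G hGmono hGhom hdn j
        rw [abs_le]; constructor <;> linarith
    -- orbit lies in a fixed slice of T
    set aT : ℝ := T 0 t0lo - 2*c0 - M with haT
    set bT : ℝ := T 0 t0hi + 2*c0 + M with hbT
    have hTslice : ∀ k i, aT + G^[k] 0 i ≤ T (G^[k] 0) i ∧ T (G^[k] 0) i ≤ bT + G^[k] 0 i := by
      intro k i
      set y := G^[k] 0 with hy
      obtain ⟨iM, hiM⟩ := Finite.exists_max y
      obtain ⟨im, him⟩ := Finite.exists_min y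
      have hTyM : T y iM ≤ T 0 iM + y iM :=
        dom_le T hmono hhom (fun j => by simpa using hiM j) iM
      have hTym : T 0 im + y im ≤ T y im :=
        dom_ge T hmono hhom (fun j => by simpa using him j) im
      have hGiM := abs_le.mp (horb k iM)
      have hGim := abs_le.mp (horb k im)
      have hGi := abs_le.mp (horb k i)
      have hw1 : (G y iM - T y iM) ≥ -c0 - T 0 t0hi := by
        have := ht0hi iM; linarith
      have hw2 : (G y im - T y im) ≤ c0 - T 0 t0lo := by
        have := ht0lo im; linarith
      have hwi_lo : G y i - T y i ≥ -c0 - T 0 t0hi - M := by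
        have := hMpq y iM i; linarith
      have hwi_hi : G y i - T y i ≤ c0 - T 0 t0lo + M := by
        have := hMpq y i im; linarith
      constructor
      · rw [haT]; linarith
      · rw [hbT]; linarith
    obtain ⟨R0, hR0⟩ := slices_bounded hn T hmono hhom hno aT bT
    have hpair : ∀ k p q, G^[k] 0 p - G^[k] 0 q ≤ R0 :=
      fun k => hR0 (G^[k] 0) (fun i => hTslice k i)
    have hR0nn : 0 ≤ R0 := by have := hpair 0 ⟨0, hn⟩ ⟨0, hn⟩; simpa using this
    -- subadditivity of the max of the orbit of 0
    set u : ℕ → ℝ := fun k => ⨆ i, G^[k] 0 i with hu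
    have hle_u : ∀ k i, G^[k] 0 i ≤ u k := fun k i =>
      le_ciSup (Set.finite_range _).bddAbove i
    have hu_le : ∀ k i, u k ≤ G^[k] 0 i + R0 := fun k i =>
      ciSup_le (fun p => by have := hpair k p i; linarith)
    have hsub : Subadditive u := by
      intro k l
      have hGl : ∀ j, G^[l] 0 j ≤ (0 : Fin n → ℝ) j + u l := fun j => by
        simpa using hle_u l j
      refine ciSup_le (fun i => ?_)
      have h1 : G^[k] (G^[l] 0) i ≤ G^[k] 0 i + u l := iter_dom_le G hGmono hGhom k hGl i
      have h2 : G^[k+l] 0 i = G^[k] (G^[l] 0) i := by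
        rw [Function.iterate_add_apply]
      rw [h2]
      have := hle_u k i
      linarith
    have hlow : ∀ (k : ℕ) (i : Fin n), (k : ℝ) * (-c0) ≤ G^[k] 0 i := by
      intro k
      induction k with
      | zero => intro i; simp
      | succ k ih =>
        intro i
        rw [Function.iterate_succ_apply']
        have h1 : (0 : Fin n → ℝ) i + (k:ℝ) * (-c0) ≤ G^[k] 0 i := by simpa using ih i
        have h2 := dom_ge G hGmono hGhom (v := 0) (c := (k:ℝ) * (-c0)) (u := G^[k] 0)
            (fun j => by simp only [Pi.zero_apply]; have := ih j; linarith) i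
        have h3 : -c0 ≤ G 0 i := by have := (abs_le.mp (hc0 i)).1; simpa using this
        push_cast
        nlinarith [h2, h3]
    have hbdd : BddBelow (Set.range fun k : ℕ => u k / k) := by
      refine ⟨min (-c0) 0, ?_⟩
      rintro r ⟨k, rfl⟩
      rcases Nat.eq_zero_or_pos k with rfl | hk
      · simp
      · have hk' : (0:ℝ) < k := by exact_mod_cast hk
        have h1 : (k:ℝ) * (-c0) ≤ u k := le_trans (hlow k ⟨0, hn⟩) (hle_u k _)
        have : -c0 ≤ u k / k := by
          rw [le_div_iff₀ hk']; linarith [h1]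
        exact le_trans (min_le_left _ _) this
    have hlim := hsub.tendsto_lim hbdd
    refine ⟨hsub.lim, ?_⟩
    intro x i
    obtain ⟨jx, hjx⟩ := Finite.exists_max (fun j => |x j|)
    set cx : ℝ := |x jx| with hcx
    have hxb : ∀ j, |x j| ≤ cx := fun j => hjx j
    set K : ℝ := cx + R0 with hK
    have hKb : ∀ k : ℕ, |G^[k] x i - u k| ≤ K := by
      intro k
      have h1 : G^[k] x i ≤ G^[k] 0 i + cx := by
        refine iter_dom_le G hGmono hGhom k (fun j => ?_) i
        have := (abs_le.mp (hxb j)).2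
        simp only [Pi.zero_apply]
        linarith
      have h2 : G^[k] 0 i ≤ G^[k] x i + cx := by
        refine iter_dom_le G hGmono hGhom k (fun j => ?_) i
        have := (abs_le.mp (hxb j)).1
        simp only [Pi.zero_apply]
        linarith
      have h3 := hle_u k i
      have h4 := hu_le k i
      rw [abs_le, hK]
      constructor <;> linarith
    have hsmall : Filter.Tendsto (fun k : ℕ => (G^[k] x i - u k) / k) Filter.atTop (nhds 0) := by
      refine squeeze_zero_norm (fun k => ?_) (tendsto_const_div_atTop_nhds_zero_nat K)
      rcases Nat.eq_zero_or_pos k with rfl | hk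
      · simp
      · have hk' : (0:ℝ) < k := by exact_mod_cast hk
        rw [Real.norm_eq_abs, abs_div, abs_of_pos hk']
        gcongr
        exact hKb k
    have hfin := hlim.add hsmall
    rw [add_zero] at hfin
    refine hfin.congr (fun k => ?_)
    rw [← add_div]
    congr 1
    ring
  · -- (b) → (a)
    intro hG
    rintro ⟨I, J, hdisj, ⟨hIne, β, hβ⟩, ⟨hJne, α, hα⟩⟩
    set d : ℝ := (β - α)/2 + 1 with hd
    set δ : Fin n → ℝ := fun i => if i ∈ J then d else if i ∈ I then -d else 0 with hδ
    set G : (Fin n → ℝ) → (Fin n → ℝ) := fun x i => T x i + δ i with hGdef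
    have hGmono : Monotone G := fun x y hxy i => add_le_add_left (hmono hxy i) _
    have hGhom : AddHomog n G := by
      intro x c
      funext i
      show T (fun i => x i + c) i + δ i = T x i + δ i + c
      rw [hhom]
      ring
    have hpert : ∀ x, hilbertSeminorm n (G x - T x) ≤ 2 * |d| := by
      intro x
      have hGT : G x - T x = δ := by funext i; simp [hGdef]
      rw [hGT]
      unfold hilbertSeminorm
      have hδb : ∀ i, |δ i| ≤ |d| := by
        intro i
        simp only [hδ]
        split_ifs
        · exact le_rfl
        · rw [abs_neg]
        · simpa using abs_nonneg d
      have h1 : (⨆ i, δ i) ≤ |d| :=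
        ciSup_le (fun i => le_trans (le_abs_self _) (hδb i))
      have h2 : -|d| ≤ ⨅ i, δ i :=
        le_ciInf (fun i => by have := (abs_le.mp (hδb i)).1; linarith)
      linarith
    obtain ⟨lam, hlam⟩ := hG G hGmono hGhom ⟨2*|d|, hpert⟩
    obtain ⟨i, hiI⟩ := hIne
    obtain ⟨j, hjJ⟩ := hJne
    have hminG : ∀ i' ∈ I, ∀ t : ℝ, 0 ≤ t → G (Iᶜ.indicator fun _ => t) i' ≤ β - d := by
      intro i' hi' t ht
      have hnotJ : i' ∉ J := Set.disjoint_left.mp hdisj hi'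
      have hδi : δ i' = -d := by simp [hδ, hnotJ, hi']
      show T (Iᶜ.indicator fun _ => t) i' + δ i' ≤ β - d
      rw [hδi]
      have := hβ i' hi' t ht
      linarith
    have hmaxG : ∀ j' ∈ J, ∀ t : ℝ, 0 ≤ t → α + d ≤ G (Jᶜ.indicator fun _ => -t) j' := by
      intro j' hj' t ht
      have hδj : δ j' = d := by simp [hδ, hj']
      show α + d ≤ T (Jᶜ.indicator fun _ => -t) j' + δ j'
      rw [hδj]
      have := hα j' hj' t ht
      linarith
    have h1 := min_growth hn G hGmono hGhom I (β - d) hminG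
    have h2 := max_growth hn G hGmono hGhom J (α + d) hmaxG
    have hle : lam ≤ β - d := by
      refine le_of_tendsto (hlam 0 i) ?_
      filter_upwards [Filter.eventually_gt_atTop 0] with k hk
      have hk' : (0:ℝ) < k := by exact_mod_cast hk
      have h3 := h1 k i hiI
      rw [div_le_iff₀ hk']
      linarith [h3]
    have hge : α + d ≤ lam := by
      refine ge_of_tendsto (hlam 0 j) ?_
      filter_upwards [Filter.eventually_gt_atTop 0] with k hk
      have hk' : (0:ℝ) < k := by exact_mod_cast hk
      have h3 := h2 k j hjJ
      rw [le_div_iff₀ hk']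
      linarith [h3]
    rw [hd] at hle hge
    linarith
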